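/- For every integer t ≥ 4, the maximum subgraph density of the graph H_t satisfies m(H_t) = η(t). -/

import Mathlib

abbrev GVert (r s : ℕ) := Unit ⊕ Fin s ⊕ Fin s × Fin r

def GRel (r s : ℕ) : GVert r s → GVert r s → Prop := fun a b =>
  match a, b with
  | Sum.inl _, Sum.inr (Sum.inr _) => True
  | Sum.inr (Sum.inl i), Sum.inr (Sum.inr p) => p.1 = i
  | _, _ => False

/-- The graph `G_r(u; u_1, …, u_s)`: `s` copies of `K_{2,r}`, where `{u_i, u_i'}` is the
part of size 2 of the `i`-th copy, glued by identifying all `u_i'` to one vertex `u`.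
Here `Sum.inl ()` is `u`, `Sum.inr (Sum.inl i)` is `u_i`, and `Sum.inr (Sum.inr (i, j))`
is the `j`-th vertex of the part of size `r` in the `i`-th copy. -/
def GStar (r s : ℕ) : SimpleGraph (GVert r s) := SimpleGraph.fromRel (GRel r s)

def htr (t : ℕ) : ℕ := (t - 1) / 2
def hts (t : ℕ) : ℕ := t - 1 - htr t

abbrev HtV (t : ℕ) :=
  GVert (t - 1) (htr t) ⊕ GVert (hts t - 1) (hts t) ⊕ GVert (htr t - 1) (t - 2)

/-- For `r = ⌊(t-1)/2⌋`, `s = t - 1 - r`: the disjoint union of `G_{t-1}(u; u_1, …, u_r)`,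
`G_{s-1}(v; v_1, …, v_s)` and `G_{r-1}(w; w_1, …, w_{t-2})`, joining `u` to
`v, v_1, …, v_s` and `v` to `w, w_1, …, w_{t-2}`. -/
def HtRel (t : ℕ) : HtV t → HtV t → Prop := fun a b =>
  match a, b with
  | Sum.inl x, Sum.inl y => GRel _ _ x y
  | Sum.inr (Sum.inl x), Sum.inr (Sum.inl y) => GRel _ _ x y
  | Sum.inr (Sum.inr x), Sum.inr (Sum.inr y) => GRel _ _ x y
  | Sum.inl (Sum.inl _), Sum.inr (Sum.inl (Sum.inl _)) => True
  | Sum.inl (Sum.inl _), Sum.inr (Sum.inl (Sum.inr (Sum.inl _))) => True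
  | Sum.inr (Sum.inl (Sum.inl _)), Sum.inr (Sum.inr (Sum.inl _)) => True
  | Sum.inr (Sum.inl (Sum.inl _)), Sum.inr (Sum.inr (Sum.inr (Sum.inl _))) => True
  | _, _ => False

/-- The graph `H_t`. -/
def Ht (t : ℕ) : SimpleGraph (HtV t) := SimpleGraph.fromRel (HtRel t)

/-- The density `|E(H)|/|V(H)|` of a subgraph `H`. -/
noncomputable def subDensity {V : Type*} {G : SimpleGraph V} (H : G.Subgraph) : ℚ :=
  (H.edgeSet.ncard : ℚ) / (H.verts.ncard : ℚ)

noncomputable def eta (t : ℕ) : ℚ :=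
  if Even t then (6 * (t : ℚ) ^ 2 - 14 * t + 12) / (3 * (t : ℚ) ^ 2 - 4 * t + 8)
  else (2 * (t : ℚ) ^ 2 - 4 * t + 2) / ((t : ℚ) ^ 2 - t + 2)



set_option maxHeartbeats 2000000

open Finset
open scoped Classical

structure WP where
  a1 : ℚ
  b1 : ℚ
  g : ℚ
  a2 : ℚ
  b2 : ℚ
  a3 : ℚ
  b3 : ℚ

def wfun (t : ℕ) (P : WP) : HtV t → HtV t → ℚ := fun a b =>
  match a, b with
  -- block 1 internal
  | .inl (.inl _), .inl (.inr (.inr _)) => 1 - P.a1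
  | .inl (.inr (.inr _)), .inl (.inl _) => P.a1
  | .inl (.inr (.inl i)), .inl (.inr (.inr p)) => if p.1 = i then 1 - P.b1 else 0
  | .inl (.inr (.inr p)), .inl (.inr (.inl i)) => if p.1 = i then P.b1 else 0
  -- cross u–B2
  | .inl (.inl _), .inr (.inl (.inl _)) => 1 - P.g
  | .inr (.inl (.inl _)), .inl (.inl _) => P.g
  | .inl (.inl _), .inr (.inl (.inr (.inl _))) => 1 - P.g
  | .inr (.inl (.inr (.inl _))), .inl (.inl _) => P.g
  -- block 2 internal
  | .inr (.inl (.inl _)), .inr (.inl (.inr (.inr _))) => 1 - P.a2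
  | .inr (.inl (.inr (.inr _))), .inr (.inl (.inl _)) => P.a2
  | .inr (.inl (.inr (.inl i))), .inr (.inl (.inr (.inr p))) => if p.1 = i then 1 - P.b2 else 0
  | .inr (.inl (.inr (.inr p))), .inr (.inl (.inr (.inl i))) => if p.1 = i then P.b2 else 0
  -- cross v–B3
  | .inr (.inl (.inl _)), .inr (.inr (.inl _)) => 0
  | .inr (.inr (.inl _)), .inr (.inl (.inl _)) => 1
  | .inr (.inl (.inl _)), .inr (.inr (.inr (.inl _))) => 0
  | .inr (.inr (.inr (.inl _))), .inr (.inl (.inl _)) => 1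
  -- block 3 internal
  | .inr (.inr (.inl _)), .inr (.inr (.inr (.inr _))) => 1 - P.a3
  | .inr (.inr (.inr (.inr _))), .inr (.inr (.inl _)) => P.a3
  | .inr (.inr (.inr (.inl i))), .inr (.inr (.inr (.inr p))) => if p.1 = i then 1 - P.b3 else 0
  | .inr (.inr (.inr (.inr p))), .inr (.inr (.inr (.inl i))) => if p.1 = i then P.b3 else 0
  | _, _ => 0


lemma ncard_eq_sum_indicator {V : Type*} [Fintype V] (S : Set V) :
    (S.ncard : ℚ) = ∑ a : V, if a ∈ S then (1:ℚ) else 0 := by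
  classical
  rw [Set.ncard_eq_toFinset_card']
  rw [Finset.sum_boole]
  have : S.toFinset = univ.filter (fun x => x ∈ S) := by ext x; simp
  rw [this]

lemma core_count {V : Type*} [Fintype V] {G : SimpleGraph V} (H : G.Subgraph)
    (w : V → V → ℚ) (hw : ∀ a b, H.Adj a b → w a b + w b a = 1) :
    (H.edgeSet.ncard : ℚ) = ∑ a : V, ∑ b : V, (if H.Adj a b then w a b else 0) := by
  classical
  have h1 : ∑ a : V, ∑ b : V, (if H.Adj a b then w a b else 0)
      = ∑ p ∈ (univ : Finset (V × V)).filter (fun p => H.Adj p.1 p.2), w p.1 p.2 := by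
    rw [Finset.sum_filter, Fintype.sum_prod_type]
  rw [h1]
  have hmaps : ∀ p ∈ (univ : Finset (V × V)).filter (fun p => H.Adj p.1 p.2),
      s(p.1, p.2) ∈ H.edgeSet.toFinset := by
    intro p hp
    simp only [mem_filter] at hp
    simp only [Set.mem_toFinset]
    exact hp.2
  have h2 := Finset.sum_fiberwise_of_maps_to (t := H.edgeSet.toFinset)
    (g := fun p : V × V => s(p.1, p.2)) hmaps (fun p => w p.1 p.2)
  rw [← h2]
  rw [Set.ncard_eq_toFinset_card']
  rw [Finset.card_eq_sum_ones]
  push_cast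
  apply Finset.sum_congr rfl
  intro e he
  simp only [Set.mem_toFinset] at he
  induction e with
  | _ a b =>
    have hab : H.Adj a b := he
    have hne : a ≠ b := (H.adj_sub hab).ne
    have : ((univ : Finset (V × V)).filter (fun p => H.Adj p.1 p.2)).filter
        (fun p => s(p.1, p.2) = s(a, b)) = {(a,b), (b,a)} := by
      ext p
      obtain ⟨x, y⟩ := p
      simp only [mem_filter, mem_univ, true_and, mem_insert, mem_singleton,
        Sym2.eq_iff, Prod.mk.injEq]
      constructor
      · rintro ⟨h, (⟨rfl, rfl⟩ | ⟨rfl, rfl⟩)⟩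
        · left; exact ⟨rfl, rfl⟩
        · right; exact ⟨rfl, rfl⟩
      · rintro (⟨rfl, rfl⟩ | ⟨rfl, rfl⟩)
        · exact ⟨hab, Or.inl ⟨rfl, rfl⟩⟩
        · exact ⟨hab.symm, Or.inr ⟨rfl, rfl⟩⟩
    rw [this]
    rw [Finset.sum_insert (by simp [hne]), Finset.sum_singleton]
    exact (hw a b hab).symm

lemma density_le_of_weights {V : Type*} [Fintype V] {G : SimpleGraph V} (H : G.Subgraph)
    (w : V → V → ℚ) (c : ℚ)
    (hw : ∀ a b, G.Adj a b → w a b + w b a = 1)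
    (hw0 : ∀ a b, 0 ≤ w a b)
    (hload : ∀ a, ∑ b : V, w a b ≤ c)
    (hne : H.verts.Nonempty) : subDensity H ≤ c := by
  classical
  have hn : (0:ℚ) < (H.verts.ncard : ℚ) := by
    have := Set.ncard_pos (s := H.verts) (H.verts.toFinite)
    exact_mod_cast this.mpr hne
  rw [subDensity, div_le_iff₀ hn]
  rw [core_count H w (fun a b h => hw a b (H.adj_sub h))]
  have hb : ∑ a : V, ∑ b : V, (if H.Adj a b then w a b else 0)
      ≤ ∑ a : V, (if a ∈ H.verts then c else 0) := by
    apply Finset.sum_le_sum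
    intro a _
    by_cases ha : a ∈ H.verts
    · simp only [ha, if_true]
      calc ∑ b : V, (if H.Adj a b then w a b else 0) ≤ ∑ b : V, w a b := by
            apply Finset.sum_le_sum
            intro b _
            by_cases h : H.Adj a b <;> simp [h, hw0 a b]
        _ ≤ c := hload a
    · simp only [ha, if_false]
      have : ∀ b : V, (if H.Adj a b then w a b else 0) = 0 := by
        intro b
        have : ¬ H.Adj a b := fun h => ha (H.edge_vert h)
        simp [this]
      simp [this]
  calc _ ≤ ∑ a : V, (if a ∈ H.verts then c else 0) := hb
    _ = c * (H.verts.ncard : ℚ) := by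
        rw [ncard_eq_sum_indicator, Finset.mul_sum]
        apply Finset.sum_congr rfl
        intro a _
        by_cases h : a ∈ H.verts <;> simp [h]

lemma density_eq_of_weights {V : Type*} [Fintype V] {G : SimpleGraph V} (S : Set V)
    (w : V → V → ℚ) (c : ℚ)
    (hw : ∀ a b, G.Adj a b → w a b + w b a = 1)
    (htight : ∀ a ∈ S, ∑ b : V, w a b = c)
    (hsupp : ∀ a ∈ S, ∀ b, w a b ≠ 0 → G.Adj a b ∧ b ∈ S)
    (hS : S.Nonempty) : subDensity ((⊤ : G.Subgraph).induce S) = c := by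
  classical
  set H := (⊤ : G.Subgraph).induce S with hH
  have hverts : H.verts = S := rfl
  have hadj : ∀ a b, H.Adj a b ↔ a ∈ S ∧ b ∈ S ∧ G.Adj a b := by
    intro a b
    simp [hH, SimpleGraph.Subgraph.induce_adj]
  have hn : (0:ℚ) < (H.verts.ncard : ℚ) := by
    have := Set.ncard_pos (s := H.verts) (H.verts.toFinite)
    exact_mod_cast this.mpr (hverts ▸ hS)
  rw [subDensity]
  rw [core_count H w (fun a b h => hw a b (H.adj_sub h))]
  have key : ∑ a : V, ∑ b : V, (if H.Adj a b then w a b else 0)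
      = ∑ a : V, (if a ∈ H.verts then c else 0) := by
    apply Finset.sum_congr rfl
    intro a _
    by_cases ha : a ∈ S
    · have ha' : a ∈ H.verts := ha
      simp only [ha', if_true]
      rw [← htight a ha]
      apply Finset.sum_congr rfl
      intro b _
      by_cases h : H.Adj a b
      · simp [h]
      · simp only [h, if_false]
        by_contra hne
        have hw' := hsupp a ha b (fun h0 => hne h0.symm)
        exact h ((hadj a b).mpr ⟨ha, hw'.2, hw'.1⟩)
    · have ha' : a ∉ H.verts := ha
      simp only [ha', if_false]
      have : ∀ b : V, (if H.Adj a b then w a b else 0) = 0 := by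
        intro b
        have : ¬ H.Adj a b := fun h => ha' (H.edge_vert h)
        simp [this]
      simp [this]
  rw [show (∑ a : V, ∑ b : V, @ite ℚ (H.Adj a b) (Classical.propDecidable _) (w a b) 0) = ∑ a : V, (if a ∈ H.verts then c else 0) by convert key]
  have : ∑ a : V, (if a ∈ H.verts then c else 0) = c * (H.verts.ncard : ℚ) := by
    rw [ncard_eq_sum_indicator, Finset.mul_sum]
    apply Finset.sum_congr rfl
    intro a _
    by_cases h : a ∈ H.verts <;> simp [h]
  rw [this]
  field_simp

lemma load_u (t : ℕ) (P : WP) (x : Unit) :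
    ∑ b : HtV t, wfun t P (Sum.inl (Sum.inl x)) b
      = (htr t * (t-1) : ℕ) * (1 - P.a1) + ((hts t : ℕ) + 1) * (1 - P.g) := by
  simp [Fintype.sum_sum_type, wfun, Fintype.sum_prod_type, Finset.sum_const,
    Finset.card_univ, mul_comm]
  ring

lemma load_u_i (t : ℕ) (P : WP) (i : Fin (htr t)) :
    ∑ b : HtV t, wfun t P (Sum.inl (Sum.inr (Sum.inl i))) b
      = ((t-1 : ℕ)) * (1 - P.b1) := by
  simp [Fintype.sum_sum_type, wfun, Fintype.sum_prod_type, Finset.sum_const,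
    Finset.card_univ, Finset.sum_ite_eq, mul_comm]
  rw [Finset.sum_comm]
  simp [Finset.sum_ite_eq', Finset.sum_const, Finset.card_univ, mul_comm]
  ring

lemma load_p1 (t : ℕ) (P : WP) (p : Fin (htr t) × Fin (t-1)) :
    ∑ b : HtV t, wfun t P (Sum.inl (Sum.inr (Sum.inr p))) b = P.a1 + P.b1 := by
  simp [Fintype.sum_sum_type, wfun, Fintype.sum_prod_type, Finset.sum_const,
    Finset.card_univ, Finset.sum_ite_eq, mul_comm]

lemma load_v (t : ℕ) (P : WP) (x : Unit) :
    ∑ b : HtV t, wfun t P (Sum.inr (Sum.inl (Sum.inl x))) b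
      = P.g + (hts t * (hts t - 1) : ℕ) * (1 - P.a2) := by
  simp [Fintype.sum_sum_type, wfun, Fintype.sum_prod_type, Finset.sum_const,
    Finset.card_univ, Finset.sum_ite_eq, mul_comm]
  ring

lemma load_v_i (t : ℕ) (P : WP) (i : Fin (hts t)) :
    ∑ b : HtV t, wfun t P (Sum.inr (Sum.inl (Sum.inr (Sum.inl i)))) b
      = P.g + ((hts t - 1 : ℕ)) * (1 - P.b2) := by
  simp [Fintype.sum_sum_type, wfun, Fintype.sum_prod_type, Finset.sum_const,
    Finset.card_univ, Finset.sum_ite_eq, mul_comm]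
  rw [Finset.sum_comm]
  simp [Finset.sum_ite_eq', Finset.sum_const, Finset.card_univ, mul_comm]
  ring

lemma load_p2 (t : ℕ) (P : WP) (p : Fin (hts t) × Fin (hts t - 1)) :
    ∑ b : HtV t, wfun t P (Sum.inr (Sum.inl (Sum.inr (Sum.inr p)))) b = P.a2 + P.b2 := by
  simp [Fintype.sum_sum_type, wfun, Fintype.sum_prod_type, Finset.sum_const,
    Finset.card_univ, Finset.sum_ite_eq, mul_comm]

lemma load_w (t : ℕ) (P : WP) (x : Unit) :
    ∑ b : HtV t, wfun t P (Sum.inr (Sum.inr (Sum.inl x))) b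
      = 1 + ((t-2) * (htr t - 1) : ℕ) * (1 - P.a3) := by
  simp [Fintype.sum_sum_type, wfun, Fintype.sum_prod_type, Finset.sum_const,
    Finset.card_univ, Finset.sum_ite_eq, mul_comm]
  ring

lemma load_w_i (t : ℕ) (P : WP) (i : Fin (t-2)) :
    ∑ b : HtV t, wfun t P (Sum.inr (Sum.inr (Sum.inr (Sum.inl i)))) b
      = 1 + ((htr t - 1 : ℕ)) * (1 - P.b3) := by
  simp [Fintype.sum_sum_type, wfun, Fintype.sum_prod_type, Finset.sum_const,
    Finset.card_univ, Finset.sum_ite_eq, mul_comm]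
  rw [Finset.sum_comm]
  simp [Finset.sum_ite_eq', Finset.sum_const, Finset.card_univ, mul_comm]
  ring

lemma load_p3 (t : ℕ) (P : WP) (p : Fin (t-2) × Fin (htr t - 1)) :
    ∑ b : HtV t, wfun t P (Sum.inr (Sum.inr (Sum.inr (Sum.inr p)))) b = P.a3 + P.b3 := by
  simp [Fintype.sum_sum_type, wfun, Fintype.sum_prod_type, Finset.sum_const,
    Finset.card_univ, Finset.sum_ite_eq, mul_comm]

lemma wfun_symm (t : ℕ) (P : WP) (a b : HtV t) (h : (Ht t).Adj a b) :
    wfun t P a b + wfun t P b a = 1 := by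
  rw [Ht, SimpleGraph.fromRel_adj] at h
  obtain ⟨hne, hrel⟩ := h
  obtain ((x | i | p) | ((x | i | p) | (x | i | p))) := a <;>
    obtain ((y | j | q) | ((y | j | q) | (y | j | q))) := b <;>
      simp_all [wfun, HtRel, GRel] <;> ring

lemma wfun_nonneg (t : ℕ) (P : WP)
    (h1 : 0 ≤ P.a1) (h1' : P.a1 ≤ 1) (h2 : 0 ≤ P.b1) (h2' : P.b1 ≤ 1)
    (h3 : 0 ≤ P.g) (h3' : P.g ≤ 1) (h4 : 0 ≤ P.a2) (h4' : P.a2 ≤ 1)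
    (h5 : 0 ≤ P.b2) (h5' : P.b2 ≤ 1) (h6 : 0 ≤ P.a3) (h6' : P.a3 ≤ 1)
    (h7 : 0 ≤ P.b3) (h7' : P.b3 ≤ 1) (a b : HtV t) :
    0 ≤ wfun t P a b := by
  obtain ((x | i | p) | ((x | i | p) | (x | i | p))) := a <;>
    obtain ((y | j | q) | ((y | j | q) | (y | j | q))) := b <;>
      simp only [wfun] <;> try split_ifs
  all_goals linarith

lemma wfun_adj (t : ℕ) (P : WP) (a b : HtV t) (h : wfun t P a b ≠ 0) :
    (Ht t).Adj a b := by
  rw [Ht, SimpleGraph.fromRel_adj]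
  obtain ((x | i | p) | ((x | i | p) | (x | i | p))) := a <;>
    obtain ((y | j | q) | ((y | j | q) | (y | j | q))) := b <;>
      simp_all [wfun, HtRel, GRel]
  all_goals (try (split_ifs at h with hc; · exact hc; · simp at h))

def SB1 (t : ℕ) : Set (HtV t) := Set.range Sum.inl

def SB12 (t : ℕ) : Set (HtV t) := {a | ∀ x, a ≠ Sum.inr (Sum.inr x)}

lemma support_odd (t : ℕ) (P : WP) (hg : P.g = 1) (a : HtV t) (ha : a ∈ SB1 t)
    (b : HtV t) (hb : wfun t P a b ≠ 0) : b ∈ SB1 t := by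
  obtain ⟨x, rfl⟩ := ha
  obtain (y | (y | j | q) | (y | j | q)) := b
  · exact ⟨y, rfl⟩
  all_goals (obtain (x | i | p) := x <;> simp_all [wfun, SB1, hg])

lemma support_even (t : ℕ) (P : WP) (a : HtV t) (ha : a ∈ SB12 t)
    (b : HtV t) (hb : wfun t P a b ≠ 0) : b ∈ SB12 t := by
  simp only [SB12, Set.mem_setOf_eq] at ha ⊢
  intro z hz
  subst hz
  obtain ((x | i | p) | ((x | i | p) | (x | i | p))) := a <;>
    obtain (z | j | q) := z <;>
      simp_all [wfun] <;>
        exact ha _ rfl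

lemma even_facts (q D c a1 b1 g a2 b2 a3 b3 : ℚ) (hq : 2 ≤ q) (hq23 : q = 2 ∨ 3 ≤ q)
    (hD : D = 3*q^2 - 2*q + 2)
    (hc : c = (6*q^2 - 7*q + 3)/D)
    (ha1 : a1 = 1 - (6*q - 4)/((2*q - 1)*D))
    (hb1 : b1 = 1 - (6*q^2 - 7*q + 3)/((2*q - 1)*D))
    (hg : g = 1 - (3*q - 1)/((q + 1)*D))
    (ha2 : a2 = 1 - (3*q + 1)/((q + 1)*D))
    (hb2 : b2 = 1 - q*(3*q + 1)/((q + 1)*D))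
    (ha3 : a3 = 1 - (3*q^2 - 5*q + 1)/(((2*q - 2)*(q - 2))*D))
    (hb3 : b3 = 1 - (3*q^2 - 5*q + 1)/((q - 2)*D)) :
    ((q-1)*(2*q-1)*(1-a1) + (q+1)*(1-g) = c) ∧
    ((2*q-1)*(1-b1) = c) ∧ (a1 + b1 = c) ∧
    (g + q*(q-1)*(1-a2) = c) ∧ (g + (q-1)*(1-b2) = c) ∧ (a2 + b2 = c) ∧
    (1 + (2*q-2)*(q-2)*(1-a3) ≤ c) ∧ (1 + (q-2)*(1-b3) ≤ c) ∧
    (3 ≤ q → a3 + b3 ≤ c) ∧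
    (0 ≤ a1) ∧ (a1 ≤ 1) ∧ (0 ≤ b1) ∧ (b1 ≤ 1) ∧ (0 ≤ g) ∧ (g ≤ 1) ∧
    (0 ≤ a2) ∧ (a2 ≤ 1) ∧ (0 ≤ b2) ∧ (b2 ≤ 1) ∧ (0 ≤ a3) ∧ (a3 ≤ 1) ∧
    (0 ≤ b3) ∧ (b3 ≤ 1) := by
  have hD0 : 0 < D := by rw [hD]; nlinarith
  have h21 : 0 < 2*q - 1 := by linarith
  have hq1 : 0 < q + 1 := by linarith
  subst hD hc ha1 hb1 hg ha2 hb2 ha3 hb3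
  have h21' : 2*q - 1 ≠ 0 := ne_of_gt h21
  have hq1' : q + 1 ≠ 0 := ne_of_gt hq1
  have hD0' : 3*q^2 - 2*q + 2 ≠ 0 := ne_of_gt hD0
  have hDn : q * (q * 3 - 2) + 2 ≠ 0 := by nlinarith
  have hDn2 : q * (3 * q - 2) + 2 ≠ 0 := by nlinarith
  have h21n : q * 2 - 1 ≠ 0 := by nlinarith
  refine ⟨?_, ?_, ?_, ?_, ?_, ?_, ?_, ?_, ?_, ?_, ?_, ?_, ?_, ?_, ?_, ?_, ?_, ?_, ?_, ?_, ?_, ?_, ?_⟩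
  · field_simp
    ring
  · field_simp
    ring
  · field_simp
    ring
  · field_simp
    ring
  · field_simp
    ring
  · field_simp
    ring
  · -- F7
    rcases hq23 with h2 | h3
    · subst h2; norm_num
    · have hp : (q - 2) ≠ 0 := by intro h; nlinarith
      have hp2 : (2*q - 2) ≠ 0 := by intro h; nlinarith
      have hq1n : q - 1 ≠ 0 := by intro h; nlinarith
      have hp2n : q * 2 - 2 ≠ 0 := by intro h; nlinarith
      have hD' : (3*q^2 - 2*q + 2) ≠ 0 := ne_of_gt hD0
      apply le_of_eq
      field_simp
      ring
  · -- F8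
    rcases hq23 with h2 | h3
    · subst h2; norm_num
    · have hp : (q - 2) ≠ 0 := by intro h; nlinarith
      have hD' : (3*q^2 - 2*q + 2) ≠ 0 := ne_of_gt hD0
      apply le_of_eq
      field_simp
      ring
  · -- F9
    intro h3
    have hp : 0 < q - 2 := by linarith
    have h22 : 0 < 2*q - 2 := by linarith
    have hden : 0 < (2*q - 2)*(q - 2)*(3*q^2 - 2*q + 2) := by
      apply mul_pos (mul_pos h22 hp) hD0
    have hden' : 0 < ((2*q - 2)*(q - 2))*(3*q^2 - 2*q + 2) := by
      apply mul_pos (mul_pos h22 hp) hD0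
    have hq1n : q - 1 ≠ 0 := by intro h; nlinarith
    have hp2n : q * 2 - 2 ≠ 0 := by intro h; nlinarith
    have hpn : q - 2 ≠ 0 := by intro h; nlinarith
    have e : (1 - (3*q^2 - 5*q + 1)/(((2*q - 2)*(q - 2))*(3*q^2 - 2*q + 2)))
        + (1 - (3*q^2 - 5*q + 1)/((q - 2)*(3*q^2 - 2*q + 2)))
        = 2 - (3*q^2 - 5*q + 1)*(2*q - 1)/((2*q - 2)*(q - 2)*(3*q^2 - 2*q + 2)) := by
      field_simp
      ring
    rw [e, sub_le_iff_le_add]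
    have e2 : (6*q^2 - 7*q + 3)/(3*q^2 - 2*q + 2)
        = 2 - (3*q + 1)/(3*q^2 - 2*q + 2) := by
      field_simp
      ring
    rw [e2]
    have : (3*q + 1)/(3*q^2 - 2*q + 2)
        ≤ (3*q^2 - 5*q + 1)*(2*q - 1)/((2*q - 2)*(q - 2)*(3*q^2 - 2*q + 2)) := by
      rw [div_le_div_iff₀ hD0 hden]
      nlinarith
    linarith
  · rw [sub_nonneg, div_le_one (by nlinarith)]
    nlinarith
  · rw [sub_le_self_iff]
    exact div_nonneg (by nlinarith) (by nlinarith)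
  · rw [sub_nonneg, div_le_one (by nlinarith)]
    nlinarith
  · rw [sub_le_self_iff]
    exact div_nonneg (by nlinarith) (by nlinarith)
  · rw [sub_nonneg, div_le_one (by nlinarith)]
    nlinarith
  · rw [sub_le_self_iff]
    exact div_nonneg (by nlinarith) (by nlinarith)
  · rw [sub_nonneg, div_le_one (by nlinarith)]
    nlinarith
  · rw [sub_le_self_iff]
    exact div_nonneg (by nlinarith) (by nlinarith)
  · rw [sub_nonneg, div_le_one (by nlinarith)]
    nlinarith
  · rw [sub_le_self_iff]
    exact div_nonneg (by nlinarith) (by nlinarith)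
  · -- 0 ≤ a3
    rcases hq23 with h2 | h3
    · subst h2; norm_num
    · have hp : 0 < q - 2 := by linarith
      have h22 : 0 < 2*q - 2 := by linarith
      have hden : 0 < ((2*q - 2)*(q - 2))*(3*q^2 - 2*q + 2) :=
        mul_pos (mul_pos h22 hp) hD0
      rw [sub_nonneg, div_le_one hden]
      nlinarith [mul_le_mul_of_nonneg_right
        (show (4:ℚ) ≤ (2*q-2)*(q-2) by nlinarith) hD0.le]
  · -- a3 ≤ 1
    rw [sub_le_self_iff]
    exact div_nonneg (by nlinarith)
      (mul_nonneg (mul_nonneg (by linarith) (by linarith)) (by nlinarith))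
  · -- 0 ≤ b3
    rcases hq23 with h2 | h3
    · subst h2; norm_num
    · have hp : 0 < q - 2 := by linarith
      have hden : 0 < (q - 2)*(3*q^2 - 2*q + 2) := mul_pos hp hD0
      rw [sub_nonneg, div_le_one hden]
      nlinarith
  · -- b3 ≤ 1
    rw [sub_le_self_iff]
    exact div_nonneg (by nlinarith) (mul_nonneg (by linarith) (by nlinarith))

lemma odd_facts (q D c a1 b1 g a2 b2 a3 b3 : ℚ) (hq : 2 ≤ q)
    (hD : D = 2*q^2 + q + 1)
    (hc : c = (4*q^2)/D)
    (ha1 : a1 = 1 - 2/D)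
    (hb1 : b1 = 1 - 2*q/D)
    (hg : g = 1)
    (ha2 : a2 = 1 - (2*q + 1)/(q*D))
    (hb2 : b2 = 1 - (2*q + 1)/D)
    (ha3 : a3 = 1 - (2*q + 1)/((2*q - 1)*D))
    (hb3 : b3 = 1 - (2*q + 1)/D) :
    (2*q^2*(1-a1) + (q+1)*(1-g) = c) ∧
    (2*q*(1-b1) = c) ∧ (a1 + b1 = c) ∧
    (g + q*(q-1)*(1-a2) ≤ c) ∧ (g + (q-1)*(1-b2) ≤ c) ∧ (a2 + b2 ≤ c) ∧
    (1 + (2*q-1)*(q-1)*(1-a3) ≤ c) ∧ (1 + (q-1)*(1-b3) ≤ c) ∧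
    (a3 + b3 ≤ c) ∧
    (0 ≤ a1) ∧ (a1 ≤ 1) ∧ (0 ≤ b1) ∧ (b1 ≤ 1) ∧ (0 ≤ g) ∧ (g ≤ 1) ∧
    (0 ≤ a2) ∧ (a2 ≤ 1) ∧ (0 ≤ b2) ∧ (b2 ≤ 1) ∧ (0 ≤ a3) ∧ (a3 ≤ 1) ∧
    (0 ≤ b3) ∧ (b3 ≤ 1) := by
  have hq0 : 0 < q := by linarith
  have h21 : 0 < 2*q - 1 := by linarith
  subst hD hc ha1 hb1 hg ha2 hb2 ha3 hb3
  have hD0 : (0:ℚ) < 2*q^2 + q + 1 := by nlinarith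
  refine ⟨?_, ?_, ?_, ?_, ?_, ?_, ?_, ?_, ?_, ?_, ?_, ?_, ?_, ?_, ?_, ?_, ?_, ?_, ?_, ?_, ?_, ?_, ?_⟩
  · field_simp
    ring
  · field_simp
    ring
  · field_simp
    ring
  · apply le_of_eq
    field_simp
    ring
  · apply le_of_eq
    field_simp
    ring
  · -- a2 + b2 ≤ c
    rw [← sub_nonneg]
    have e : 4*q^2/(2*q^2 + q + 1) - (1 - (2*q + 1)/(q*(2*q^2 + q + 1))
        + (1 - (2*q + 1)/(2*q^2 + q + 1))) = (q + 1)/(q*(2*q^2 + q + 1)) := by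
      field_simp
      ring
    rw [e]
    positivity
  · apply le_of_eq
    field_simp
    ring
  · apply le_of_eq
    field_simp
    ring
  · -- a3 + b3 ≤ c
    rw [← sub_nonneg]
    have e : 4*q^2/(2*q^2 + q + 1) - (1 - (2*q + 1)/((2*q - 1)*(2*q^2 + q + 1))
        + (1 - (2*q + 1)/(2*q^2 + q + 1))) = 2/((2*q - 1)*(2*q^2 + q + 1)) := by
      have h21' : (2*q - 1) ≠ 0 := ne_of_gt h21
      have hD0' : (2*q^2 + q + 1) ≠ 0 := ne_of_gt hD0
      have hDn : q * (q * 2 + 1) + 1 ≠ 0 := by nlinarith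
      have h21n : q * 2 - 1 ≠ 0 := by nlinarith
      field_simp
      ring
    rw [e]
    positivity
  · rw [sub_nonneg, div_le_one hD0]
    nlinarith
  · rw [sub_le_self_iff]
    positivity
  · rw [sub_nonneg, div_le_one hD0]
    nlinarith
  · rw [sub_le_self_iff]
    positivity
  · norm_num
  · norm_num
  · rw [sub_nonneg, div_le_one (by positivity)]
    nlinarith
  · rw [sub_le_self_iff]
    positivity
  · rw [sub_nonneg, div_le_one hD0]
    nlinarith
  · rw [sub_le_self_iff]
    positivity
  · rw [sub_nonneg, div_le_one (mul_pos h21 hD0)]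
    nlinarith
  · rw [sub_le_self_iff]
    exact div_nonneg (by linarith) (mul_nonneg (by linarith) (by positivity))
  · rw [sub_nonneg, div_le_one hD0]
    nlinarith
  · rw [sub_le_self_iff]
    positivity

lemma even_case (t k : ℕ) (hk : 2 ≤ k) (ht : t = 2*k) :
    (∀ H : (Ht t).Subgraph, H.verts.Nonempty → subDensity H ≤ eta t) ∧
    (∃ H : (Ht t).Subgraph, H.verts.Nonempty ∧ subDensity H = eta t) := by
  have hr : htr t = k - 1 := by subst ht; unfold htr; omega
  have hs : hts t = k := by subst ht; unfold hts htr; omega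
  set q : ℚ := (k : ℚ) with hqdef
  have hq : 2 ≤ q := by rw [hqdef]; exact_mod_cast hk
  have hq23 : q = 2 ∨ 3 ≤ q := by
    rcases Nat.lt_or_ge k 3 with h | h
    · left; have hk2 : k = 2 := by omega
      rw [hqdef, hk2]; norm_num
    · right; rw [hqdef]; exact_mod_cast h
  have cT1 : ((t - 1 : ℕ) : ℚ) = 2*q - 1 := by
    subst ht; rw [Nat.cast_sub (by omega), hqdef]; push_cast; ring
  have cS : ((hts t : ℕ) : ℚ) = q := by rw [hs]
  have cS1 : ((hts t - 1 : ℕ) : ℚ) = q - 1 := by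
    rw [hs, Nat.cast_sub (by omega), hqdef]; push_cast; ring
  have cR1 : ((htr t - 1 : ℕ) : ℚ) = q - 2 := by
    rw [hr, Nat.cast_sub (by omega), Nat.cast_sub (by omega), hqdef]; push_cast; ring
  have cP1 : ((htr t * (t - 1) : ℕ) : ℚ) = (q-1)*(2*q-1) := by
    rw [Nat.cast_mul, cT1, hr, Nat.cast_sub (by omega), hqdef]; push_cast; ring
  have cP2 : ((hts t * (hts t - 1) : ℕ) : ℚ) = q*(q-1) := by
    rw [Nat.cast_mul, cS1, cS]
  have cP3 : (((t - 2) * (htr t - 1) : ℕ) : ℚ) = (2*q-2)*(q-2) := by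
    rw [Nat.cast_mul, cR1, ht, Nat.cast_sub (by omega), hqdef]; push_cast; ring
  have hev : Even t := ⟨k, by omega⟩
  have heta : eta t = (6*q^2 - 7*q + 3)/(3*q^2 - 2*q + 2) := by
    rw [eta, if_pos hev]
    have hT : ((t : ℕ) : ℚ) = 2*q := by subst ht; rw [hqdef]; push_cast; ring
    rw [hT, div_eq_div_iff (by nlinarith) (by nlinarith)]
    ring
  set D : ℚ := 3*q^2 - 2*q + 2 with hD
  let P : WP := ⟨1 - (6*q - 4)/((2*q - 1)*D), 1 - (6*q^2 - 7*q + 3)/((2*q - 1)*D),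
    1 - (3*q - 1)/((q + 1)*D), 1 - (3*q + 1)/((q + 1)*D), 1 - q*(3*q + 1)/((q + 1)*D),
    1 - (3*q^2 - 5*q + 1)/(((2*q - 2)*(q - 2))*D), 1 - (3*q^2 - 5*q + 1)/((q - 2)*D)⟩
  obtain ⟨F1, F2, F3, F4, F5, F6, F7, F8, F9, R1, R2, R3, R4, R5, R6, R7, R8, R9,
      R10, R11, R12, R13, R14⟩ :=
    even_facts q D (eta t) P.a1 P.b1 P.g P.a2 P.b2 P.a3 P.b3 hq hq23 hD heta
      rfl rfl rfl rfl rfl rfl rfl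
  have hload : ∀ a : HtV t, ∑ b, wfun t P a b ≤ eta t := by
    intro a
    obtain ((x | i | p) | ((x | i | p) | (x | i | p))) := a
    · rw [load_u, cP1, cS]; linarith [F1]
    · rw [load_u_i, cT1]; linarith [F2]
    · rw [load_p1]; linarith [F3]
    · rw [load_v, cP2]; linarith [F4]
    · rw [load_v_i, cS1]; linarith [F5]
    · rw [load_p2]; linarith [F6]
    · rw [load_w, cP3]; linarith [F7]
    · rw [load_w_i, cR1]; linarith [F8]
    · rcases Nat.lt_or_ge k 3 with h | h
      · have h0 : htr t - 1 = 0 := by omega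
        have hp2 := p.2
        rw [h0] at hp2
        exact hp2.elim0
      · have h3q : (3:ℚ) ≤ q := by rw [hqdef]; exact_mod_cast h
        rw [load_p3]; linarith [F9 h3q]
  have htight : ∀ a ∈ SB12 t, ∑ b, wfun t P a b = eta t := by
    intro a ha
    obtain ((x | i | p) | ((x | i | p) | (x | i | p))) := a
    · rw [load_u, cP1, cS]; linarith [F1]
    · rw [load_u_i, cT1]; linarith [F2]
    · rw [load_p1]; linarith [F3]
    · rw [load_v, cP2]; linarith [F4]
    · rw [load_v_i, cS1]; linarith [F5]
    · rw [load_p2]; linarith [F6]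
    · exact absurd rfl (ha (Sum.inl x))
    · exact absurd rfl (ha (Sum.inr (Sum.inl i)))
    · exact absurd rfl (ha (Sum.inr (Sum.inr p)))
  have hsymm := wfun_symm t P
  have hnn := wfun_nonneg t P R1 R2 R3 R4 R5 R6 R7 R8 R9 R10 R11 R12 R13 R14
  constructor
  · intro H hne
    exact density_le_of_weights H (wfun t P) (eta t) hsymm hnn hload hne
  · refine ⟨(⊤ : (Ht t).Subgraph).induce (SB12 t), ?_, ?_⟩
    · exact ⟨Sum.inl (Sum.inl ()), fun x => by simp⟩
    · exact density_eq_of_weights (SB12 t) (wfun t P) (eta t) hsymm htight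
        (fun a ha b hb => ⟨wfun_adj t P a b hb, support_even t P a ha b hb⟩)
        ⟨Sum.inl (Sum.inl ()), fun x => by simp⟩

lemma odd_case (t k : ℕ) (hk : 2 ≤ k) (ht : t = 2*k + 1) :
    (∀ H : (Ht t).Subgraph, H.verts.Nonempty → subDensity H ≤ eta t) ∧
    (∃ H : (Ht t).Subgraph, H.verts.Nonempty ∧ subDensity H = eta t) := by
  have hr : htr t = k := by subst ht; unfold htr; omega
  have hs : hts t = k := by subst ht; unfold hts htr; omega
  set q : ℚ := (k : ℚ) with hqdef
  have hq : 2 ≤ q := by rw [hqdef]; exact_mod_cast hk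
  have cT1 : ((t - 1 : ℕ) : ℚ) = 2*q := by
    subst ht; rw [Nat.cast_sub (by omega), hqdef]; push_cast; ring
  have cS : ((hts t : ℕ) : ℚ) = q := by rw [hs]
  have cS1 : ((hts t - 1 : ℕ) : ℚ) = q - 1 := by
    rw [hs, Nat.cast_sub (by omega), hqdef]; push_cast; ring
  have cR1 : ((htr t - 1 : ℕ) : ℚ) = q - 1 := by
    rw [hr, Nat.cast_sub (by omega), hqdef]; push_cast; ring
  have cP1 : ((htr t * (t - 1) : ℕ) : ℚ) = 2*q^2 := by
    rw [Nat.cast_mul, cT1, hr, hqdef]; push_cast; ring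
  have cP2 : ((hts t * (hts t - 1) : ℕ) : ℚ) = q*(q-1) := by
    rw [Nat.cast_mul, cS1, cS]
  have cP3 : (((t - 2) * (htr t - 1) : ℕ) : ℚ) = (2*q-1)*(q-1) := by
    rw [Nat.cast_mul, cR1, ht, Nat.cast_sub (by omega), hqdef]; push_cast; ring
  have hodd : ¬ Even t := by rintro ⟨m, hm⟩; omega
  have heta : eta t = (4*q^2)/(2*q^2 + q + 1) := by
    rw [eta, if_neg hodd]
    have hT : ((t : ℕ) : ℚ) = 2*q + 1 := by subst ht; rw [hqdef]; push_cast; ring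
    rw [hT, div_eq_div_iff (by nlinarith) (by nlinarith)]
    ring
  set D : ℚ := 2*q^2 + q + 1 with hD
  let P : WP := ⟨1 - 2/D, 1 - 2*q/D, 1, 1 - (2*q + 1)/(q*D), 1 - (2*q + 1)/D,
    1 - (2*q + 1)/((2*q - 1)*D), 1 - (2*q + 1)/D⟩
  obtain ⟨F1, F2, F3, F4, F5, F6, F7, F8, F9, R1, R2, R3, R4, R5, R6, R7, R8, R9,
      R10, R11, R12, R13, R14⟩ :=
    odd_facts q D (eta t) P.a1 P.b1 P.g P.a2 P.b2 P.a3 P.b3 hq hD heta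
      rfl rfl rfl rfl rfl rfl rfl
  have hload : ∀ a : HtV t, ∑ b, wfun t P a b ≤ eta t := by
    intro a
    obtain ((x | i | p) | ((x | i | p) | (x | i | p))) := a
    · rw [load_u, cP1, cS]; linarith [F1]
    · rw [load_u_i, cT1]; linarith [F2]
    · rw [load_p1]; linarith [F3]
    · rw [load_v, cP2]; linarith [F4]
    · rw [load_v_i, cS1]; linarith [F5]
    · rw [load_p2]; linarith [F6]
    · rw [load_w, cP3]; linarith [F7]
    · rw [load_w_i, cR1]; linarith [F8]
    · rw [load_p3]; linarith [F9]
  have htight : ∀ a ∈ SB1 t, ∑ b, wfun t P a b = eta t := by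
    intro a ha
    obtain ((x | i | p) | y) := a
    · rw [load_u, cP1, cS]; linarith [F1]
    · rw [load_u_i, cT1]; linarith [F2]
    · rw [load_p1]; linarith [F3]
    · exact absurd ha (by simp [SB1])
  have hsymm := wfun_symm t P
  have hnn := wfun_nonneg t P R1 R2 R3 R4 R5 R6 R7 R8 R9 R10 R11 R12 R13 R14
  constructor
  · intro H hne
    exact density_le_of_weights H (wfun t P) (eta t) hsymm hnn hload hne
  · refine ⟨(⊤ : (Ht t).Subgraph).induce (SB1 t), ?_, ?_⟩
    · exact ⟨Sum.inl (Sum.inl ()), ⟨Sum.inl (), rfl⟩⟩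
    · exact density_eq_of_weights (SB1 t) (wfun t P) (eta t) hsymm htight
        (fun a ha b hb => ⟨wfun_adj t P a b hb, support_odd t P rfl a ha b hb⟩)
        ⟨Sum.inl (Sum.inl ()), ⟨Sum.inl (), rfl⟩⟩


theorem stmt_4 (t : ℕ) (ht : 4 ≤ t) :
    (∀ H : (Ht t).Subgraph, H.verts.Nonempty → subDensity H ≤ eta t) ∧
    (∃ H : (Ht t).Subgraph, H.verts.Nonempty ∧ subDensity H = eta t) := by
  rcases Nat.even_or_odd t with ⟨k, hk⟩ | ⟨k, hk⟩
  · exact even_case t k (by omega) (by omega)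
  · exact odd_case t k (by omega) (by omega)
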